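/- Let A, k, f > 0 with A·k < f, and let ω ≥ 0. Then the system of equations A·k·cos X·cosh Y − ω·Y − f = 0 and A·k·sin X·sinh Y = 0 has exactly one solution (X, Y) in the region [0, π] × [0, ∞), namely (0, Y₀), where Y₀ is the unique positive solution of A·k·cosh Y₀ = ω·Y₀ + f. -/

import Mathlib

open Real

private lemma cosh_quad_lb (Y : ℝ) (hY : 0 ≤ Y) : Y ^ 2 / 8 ≤ Real.cosh Y := by
  have h1 : Y / 2 + 1 ≤ Real.exp (Y / 2) := Real.add_one_le_exp (Y / 2)
  have h2 : Real.exp (Y / 2) * Real.exp (Y / 2) = Real.exp Y := by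
    rw [← Real.exp_add]; ring_nf
  have h3 : 0 < Real.exp (-Y) := Real.exp_pos _
  rw [Real.cosh_eq]
  nlinarith [Real.exp_pos (Y / 2)]

private lemma cosh_strict_conv {a b y : ℝ} (ha : 0 < a) (hb : 0 < b)
    (hab : a + b = 1) (hy : y ≠ 0) : Real.cosh (b * y) < a + b * Real.cosh y := by
  have h1 := strictConvexOn_exp.2 (Set.mem_univ (0:ℝ)) (Set.mem_univ y)
    (Ne.symm hy) ha hb hab
  have h2 := strictConvexOn_exp.2 (Set.mem_univ (0:ℝ)) (Set.mem_univ (-y))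
    (by simpa using (Ne.symm (neg_ne_zero.mpr hy))) ha hb hab
  simp only [smul_eq_mul, mul_zero, zero_add, Real.exp_zero, mul_one] at h1 h2
  rw [Real.cosh_eq, Real.cosh_eq]
  rw [show -(b*y) = b * (-y) by ring]
  linarith

private lemma exists_root (A k f ω : ℝ) (hA : 0 < A) (hk : 0 < k) (hf : 0 < f)
    (hAk : A * k < f) (hω : 0 ≤ ω) :
    ∃ Y₀ : ℝ, 0 < Y₀ ∧ A * k * Real.cosh Y₀ = ω * Y₀ + f := by
  have hAk0 : 0 < A * k := mul_pos hA hk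
  obtain ⟨M, hM1, h2⟩ : ∃ M : ℝ, 1 ≤ M ∧ 8 * (ω + f) ≤ A * k * M := by
    refine ⟨8 * (ω + f) / (A * k) + 1, ?_, ?_⟩
    · have : 0 ≤ 8 * (ω + f) / (A * k) := by positivity
      linarith
    · have hc : A * k * (8 * (ω + f) / (A * k)) = 8 * (ω + f) := by field_simp
      nlinarith
  have hM0 : 0 ≤ M := by linarith
  have hg0 : A * k * Real.cosh 0 - ω * 0 - f < 0 := by
    simp [Real.cosh_zero]; linarith
  have hgM : 0 ≤ A * k * Real.cosh M - ω * M - f := by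
    have h1 : M ^ 2 / 8 ≤ Real.cosh M := cosh_quad_lb M hM0
    have hA1 : A * k * (M ^ 2 / 8) ≤ A * k * Real.cosh M :=
      mul_le_mul_of_nonneg_left h1 hAk0.le
    have hA2 : 8 * (ω + f) * M ≤ A * k * M * M :=
      mul_le_mul_of_nonneg_right h2 hM0
    have hfM : f * 1 ≤ f * M := mul_le_mul_of_nonneg_left hM1 hf.le
    have homM : ω * 1 ≤ ω * M := mul_le_mul_of_nonneg_left hM1 hω
    nlinarith
  have hcont : ContinuousOn (fun Y => A * k * Real.cosh Y - ω * Y - f)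
      (Set.Icc 0 M) := by fun_prop
  obtain ⟨Y₀, hY₀mem, hY₀⟩ := intermediate_value_Icc hM0 hcont ⟨le_of_lt hg0, hgM⟩
  have hg : A * k * Real.cosh Y₀ - ω * Y₀ - f = 0 := hY₀
  refine ⟨Y₀, ?_, by linarith⟩
  rcases lt_or_eq_of_le hY₀mem.1 with h | h
  · exact h
  · exfalso
    rw [← h] at hg
    simp [Real.cosh_zero] at hg
    simp [Real.cosh_zero] at hg0
    linarith

private lemma root_unique (A k f ω : ℝ) (hA : 0 < A) (hk : 0 < k) (hf : 0 < f)
    (hAk : A * k < f) (hω : 0 ≤ ω) {Y₁ Y₂ : ℝ} (h1 : 0 < Y₁)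
    (e1 : A * k * Real.cosh Y₁ = ω * Y₁ + f) (h2 : 0 < Y₂)
    (e2 : A * k * Real.cosh Y₂ = ω * Y₂ + f) : Y₁ = Y₂ := by
  by_contra hne
  wlog hlt : Y₁ < Y₂ generalizing Y₁ Y₂
  · exact this h2 e2 h1 e1 (Ne.symm hne) (lt_of_le_of_ne (not_lt.mp hlt) (Ne.symm hne))
  have hb : 0 < Y₁ / Y₂ := div_pos h1 h2
  have hb1 : Y₁ / Y₂ < 1 := (div_lt_one h2).mpr hlt
  set b := Y₁ / Y₂ with hbdef
  set a := 1 - b with haa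
  have ha : 0 < a := by simp [haa]; linarith
  have hab : a + b = 1 := by ring
  have hby : b * Y₂ = Y₁ := div_mul_cancel₀ Y₁ (ne_of_gt h2)
  have hconv := cosh_strict_conv ha hb hab (ne_of_gt h2)
  rw [hby] at hconv
  have hAk0 : 0 < A * k := mul_pos hA hk
  have hmain : A * k * Real.cosh Y₁ < A * k * a + b * (A * k * Real.cosh Y₂) := by
    nlinarith
  rw [e1, e2] at hmain
  have hYb : ω * Y₁ = b * (ω * Y₂) := by
    field_simp [hbdef]; rw [← hby]; ring
  nlinarith [hmain, hYb]

/-- For `A, k, f > 0` with `Ak < f` and `ω ≥ 0`, the system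
`Ak·cos X·cosh Y − ωY − f = 0`, `Ak·sin X·sinh Y = 0` has exactly one solution
in `[0, π] × [0, ∞)`, namely `(0, Y₀)` with `Y₀` the unique positive solution of
`Ak·cosh Y₀ = ωY₀ + f`. -/
theorem unique_critical_point (A k f ω : ℝ) (hA : 0 < A) (hk : 0 < k) (hf : 0 < f)
    (hAk : A * k < f) (hω : 0 ≤ ω) :
    (∃! Y₀ : ℝ, 0 < Y₀ ∧ A * k * Real.cosh Y₀ = ω * Y₀ + f) ∧
    (∀ X Y : ℝ,
      (X ∈ Set.Icc 0 π ∧ 0 ≤ Y ∧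
        A * k * Real.cos X * Real.cosh Y - ω * Y - f = 0 ∧
        A * k * Real.sin X * Real.sinh Y = 0) ↔
      (X = 0 ∧ 0 < Y ∧ A * k * Real.cosh Y = ω * Y + f)) := by
  have hAk0 : 0 < A * k := mul_pos hA hk
  constructor
  · obtain ⟨Y₀, hp, he⟩ := exists_root A k f ω hA hk hf hAk hω
    exact ⟨Y₀, ⟨hp, he⟩,
      fun y hy => root_unique A k f ω hA hk hf hAk hω hy.1 hy.2 hp he⟩
  · intro X Y
    constructor
    · rintro ⟨⟨hX0, hXπ⟩, hY0, heq1, heq2⟩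
      have hY : 0 < Y := by
        rcases eq_or_lt_of_le hY0 with h | h
        · exfalso
          rw [← h] at heq1
          simp [Real.cosh_zero] at heq1
          nlinarith [Real.cos_le_one X, Real.neg_one_le_cos X]
        · exact h
      have hsinh : (0:ℝ) < Real.sinh Y := Real.sinh_pos_iff.mpr hY
      have hsin : Real.sin X = 0 := by
        rcases mul_eq_zero.mp heq2 with h | h
        · rcases mul_eq_zero.mp h with h' | h'
          · exact absurd h' (ne_of_gt hAk0)
          · exact h'
        · exact absurd h (ne_of_gt hsinh)
      have hX : X = 0 := by
        rcases eq_or_lt_of_le hX0 with h | h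
        · exact h.symm
        · exfalso
          rcases eq_or_lt_of_le hXπ with h' | h'
          · rw [h'] at heq1
            simp [Real.cos_pi] at heq1
            nlinarith [Real.one_le_cosh Y]
          · exact absurd hsin (ne_of_gt (Real.sin_pos_of_pos_of_lt_pi h h'))
      subst hX
      simp [Real.cos_zero] at heq1
      exact ⟨rfl, hY, by linarith⟩
    · rintro ⟨rfl, hY, he⟩
      refine ⟨⟨le_refl 0, Real.pi_pos.le⟩, hY.le, ?_, ?_⟩
      · simp [Real.cos_zero]; linarith
      · simp [Real.sin_zero]
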